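/- Let ((H_n, ξ_n)_{n∈ℕ∪{∞}}, M) be a Banach stacking in which every H_n is a real Hilbert space, and let Φ_n : H_n → (−∞,+∞]. Suppose there is λ > 0 such that for every n ∈ ℕ the function Φ_n is λ-convex, proper, and lower semicontinuous, and Φ_∞ is λ-convex and proper. Suppose further that (Φ_n)_{n∈ℕ} Γ-converges to Φ_∞ over the Banach stacking. Then there exists L ∈ ℝ such that Φ_n(x) ≥ L for every n ∈ ℕ ∪ {∞} and every x ∈ H_n. -/

import Mathlib

open Filter Topology

/-- `Φ` is `λ`-convex: `Φ(tx + (1−t)y) ≤ tΦ(x) + (1−t)Φ(y) − (λ/2)t(1−t)‖x−y‖²`. -/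
def LambdaConvex {H : Type*} [NormedAddCommGroup H] [NormedSpace ℝ H]
    (l : ℝ) (Φ : H → EReal) : Prop :=
  ∀ x y : H, ∀ t : ℝ, t ∈ Set.Icc (0 : ℝ) 1 →
    Φ (t • x + (1 - t) • y) ≤
      (t : EReal) * Φ x + ((1 - t : ℝ) : EReal) * Φ y
        - (((l / 2) * t * (1 - t) * ‖x - y‖ ^ 2 : ℝ) : EReal)

lemma lc_real {H : Type*} [NormedAddCommGroup H] [NormedSpace ℝ H] {l : ℝ} {Φ : H → EReal}
    (hconv : LambdaConvex l Φ) {x y : H} {ax ay : ℝ} (hx : Φ x ≤ (ax : EReal))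
    (hy : Φ y ≤ (ay : EReal)) {t : ℝ} (ht0 : 0 ≤ t) (ht1 : t ≤ 1) :
    Φ (t • x + (1 - t) • y) ≤
      ((t * ax + (1 - t) * ay - l / 2 * t * (1 - t) * ‖x - y‖ ^ 2 : ℝ) : EReal) := by
  have h := hconv x y t ⟨ht0, ht1⟩
  refine h.trans ?_
  have h1 : (t : EReal) * Φ x ≤ ((t * ax : ℝ) : EReal) := by
    rw [EReal.coe_mul]
    exact mul_le_mul_of_nonneg_left hx (by exact_mod_cast ht0)
  have h2 : ((1 - t : ℝ) : EReal) * Φ y ≤ (((1 - t) * ay : ℝ) : EReal) := by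
    rw [EReal.coe_mul]
    exact mul_le_mul_of_nonneg_left hy (by exact_mod_cast (by linarith : (0:ℝ) ≤ 1 - t))
  calc (t:EReal) * Φ x + ((1-t:ℝ):EReal) * Φ y - ((l/2*t*(1-t)*‖x-y‖^2 : ℝ):EReal)
      ≤ ((t*ax : ℝ):EReal) + (((1-t)*ay : ℝ):EReal) - ((l/2*t*(1-t)*‖x-y‖^2 : ℝ):EReal) :=
        EReal.sub_le_sub (add_le_add h1 h2) le_rfl
    _ = _ := by norm_cast

lemma key1 {H : Type*} [NormedAddCommGroup H] [NormedSpace ℝ H] {l : ℝ} (hl : 0 < l)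
    {Φ : H → EReal} (hconv : LambdaConvex l Φ) (x₀ z : H) (C B ε : ℝ) (hC : 0 ≤ C)
    (hB : 0 ≤ B) (hε : 0 < ε) (hx₀ : Φ x₀ ≤ (C : EReal))
    (hz : Φ z ≤ ((-(2*(B+C) + 4*(B+C+1)^2/(l*ε^2)) : ℝ) : EReal)) :
    ∃ u : H, ‖u - x₀‖ ≤ ε ∧ Φ u ≤ ((-B : ℝ) : EReal) := by
  set a : ℝ := -(2*(B+C) + 4*(B+C+1)^2/(l*ε^2)) with ha
  clear_value a
  have hapos : 0 ≤ 2*(B+C) + 4*(B+C+1)^2/(l*ε^2) := by positivity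
  have haneg : a ≤ 0 := by rw [ha]; linarith
  have ha2 : a ≤ -(2*(B+C)) := by
    have : 0 ≤ 4*(B+C+1)^2/(l*ε^2) := by positivity
    rw [ha]; linarith
  set d : ℝ := ‖z - x₀‖ with hdd
  have hd0 : 0 ≤ d := norm_nonneg _
  by_cases hcase : d ≤ 2*ε
  · refine ⟨(1/2 : ℝ) • z + (1 - 1/2 : ℝ) • x₀, ?_, ?_⟩
    · have he : (1/2 : ℝ) • z + (1 - 1/2 : ℝ) • x₀ - x₀ = (1/2 : ℝ) • (z - x₀) := by
        module
      rw [he, norm_smul, Real.norm_eq_abs]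
      rw [← hdd]
      rw [abs_of_pos (by norm_num : (0:ℝ) < 1/2)]
      linarith
    · have h := lc_real hconv hz hx₀ (t := 1/2) (by norm_num) (by norm_num)
      refine h.trans ?_
      rw [EReal.coe_le_coe_iff, ← hdd]
      have hq : 0 ≤ l/2*(1/2)*(1-1/2)*d^2 := by positivity
      linarith
  · have hd : 0 < d := lt_trans (by positivity) (not_le.1 hcase)
    set t : ℝ := ε/d with htd
    clear_value t
    have ht0 : 0 < t := by rw [htd]; positivity
    have ht1 : t ≤ 1/2 := by rw [htd, div_le_iff₀ hd]; linarith [not_le.1 hcase]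
    have h := lc_real hconv hz hx₀ (t := t) ht0.le (by linarith)
    refine ⟨t • z + (1 - t) • x₀, ?_, ?_⟩
    · have he : t • z + (1 - t) • x₀ - x₀ = t • (z - x₀) := by module
      rw [he, norm_smul, Real.norm_eq_abs, ← hdd, abs_of_pos ht0, htd]
      exact le_of_eq (div_mul_cancel₀ ε hd.ne')
    · refine h.trans ?_
      rw [EReal.coe_le_coe_iff, ← hdd]
      have h1 : (1-t)*C ≤ C := mul_le_of_le_one_left hC (by linarith)
      have htd2 : t*d^2 = ε*d := by rw [htd]; field_simp
      have hq : l*ε*d/4 ≤ l/2*t*(1-t)*d^2 := by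
        have h2 : (1:ℝ)/2 ≤ 1 - t := by linarith
        calc l*ε*d/4 = l/2*(1/2)*(ε*d) := by ring
          _ ≤ l/2*(1-t)*(ε*d) := by gcongr <;> positivity
          _ = l/2*t*(1-t)*d^2 := by rw [← htd2]; ring
      by_cases hd2 : 4*(B+C)/(l*ε) ≤ d
      · have hlε : 0 < l*ε := by positivity
        rw [div_le_iff₀ hlε] at hd2
        have hBC : B + C ≤ l*ε*d/4 := by nlinarith
        have hta : t*a ≤ 0 := mul_nonpos_of_nonneg_of_nonpos ht0.le haneg
        linarith
      · have hBC1 : (0:ℝ) < B + C + 1 := by linarith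
        have hlε : 0 < l*ε := by positivity
        have hdlt : d < 4*(B+C+1)/(l*ε) := by
          refine lt_of_lt_of_le (not_le.1 hd2) ?_
          apply div_le_div_of_nonneg_right ?_ hlε.le <;> try linarith
        rw [lt_div_iff₀ hlε] at hdlt
        set t₀ : ℝ := l*ε^2/(4*(B+C+1)) with ht₀d
        clear_value t₀
        have ht₀ : t₀ ≤ t := by
          rw [ht₀d, htd, div_le_div_iff₀ (by positivity) hd]
          nlinarith
        have hta : t*a ≤ t₀*a := mul_le_mul_of_nonpos_right ht₀ haneg
        have hkey : t₀ * (4*(B+C+1)^2/(l*ε^2)) = B+C+1 := by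
          rw [ht₀d]; field_simp
        have ht₀0 : 0 ≤ t₀ := by rw [ht₀d]; positivity
        have hta2 : t₀*a ≤ -(B+C+1) := by
          rw [ha, mul_neg, mul_add, hkey]
          have : 0 ≤ t₀*(2*(B+C)) := by positivity
          linarith
        have hq0 : 0 ≤ l/2*t*(1-t)*d^2 := by
          have : (0:ℝ) ≤ 1 - t := by linarith
          positivity
        linarith

lemma key2 {H : Type*} [NormedAddCommGroup H] [NormedSpace ℝ H] {l : ℝ} (hl : 0 < l)
    {Φ : H → EReal} (hconv : LambdaConvex l Φ) (x₀ z : H) (C m : ℝ) (hC : 0 ≤ C)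
    (hx₀ : Φ x₀ ≤ (C : EReal)) (hlb : ∀ v : H, ((m : ℝ) : EReal) ≤ Φ v)
    (hz : Φ z ≤ ((m + 1 : ℝ) : EReal)) (hm4 : m ≤ -4) (hmC : m ≤ -(C+1)) :
    ‖((1/(Real.sqrt (Real.sqrt (-m)))^3) • z
        + (1 - 1/(Real.sqrt (Real.sqrt (-m)))^3) • x₀) - x₀‖
      ≤ 3/(Real.sqrt l * Real.sqrt (Real.sqrt (-m))) ∧
    Φ ((1/(Real.sqrt (Real.sqrt (-m)))^3) • z
        + (1 - 1/(Real.sqrt (Real.sqrt (-m)))^3) • x₀)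
      ≤ ((C - (Real.sqrt (Real.sqrt (-m)))/2 : ℝ) : EReal) := by
  have hm0 : (0:ℝ) ≤ -m := by linarith
  set q : ℝ := Real.sqrt (Real.sqrt (-m)) with hqd
  have hq2 : q^2 = Real.sqrt (-m) := Real.sq_sqrt (Real.sqrt_nonneg _)
  have hq4 : q^4 = -m := by
    have : q^4 = (q^2)^2 := by ring
    rw [this, hq2]; exact Real.sq_sqrt hm0
  have hq2ge : (2:ℝ) ≤ q^2 := by
    rw [hq2]
    have : Real.sqrt 4 ≤ Real.sqrt (-m) := Real.sqrt_le_sqrt (by linarith)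
    have h4 : Real.sqrt 4 = 2 := by
      rw [show (4:ℝ) = 2^2 by norm_num, Real.sqrt_sq (by norm_num)]
    linarith
  have hq0 : 0 < q := by
    rw [hqd]; exact Real.sqrt_pos.2 (Real.sqrt_pos.2 (by linarith))
  have hq1 : 1 ≤ q := by nlinarith
  have hq3 : 2 ≤ q^3 := by nlinarith
  set t : ℝ := 1/q^3 with htd
  have ht0 : 0 < t := by rw [htd]; positivity
  have ht12 : t ≤ 1/2 := by
    rw [htd, div_le_div_iff₀ (by positivity) (by norm_num)]
    linarith
  set d : ℝ := ‖z - x₀‖ with hdd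
  have hd0 : 0 ≤ d := norm_nonneg _
  -- midpoint estimate gives a bound on d
  have hmid := lc_real hconv hz hx₀ (t := 1/2) (by norm_num) (by norm_num)
  have hmid2 : (m : EReal) ≤ ((1/2 * (m+1) + (1 - 1/2) * C - l / 2 * (1/2) * (1 - 1/2) * ‖z - x₀‖ ^ 2 : ℝ) : EReal) :=
    le_trans (hlb _) hmid
  rw [EReal.coe_le_coe_iff, ← hdd] at hmid2
  have hd2 : d^2 ≤ 8*q^4/l := by
    have h1 : l/8*d^2 ≤ (1 + C - m)/2 := by linarith
    have h2 : 1 + C - m ≤ 2*q^4 := by rw [hq4]; linarith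
    rw [le_div_iff₀ hl]
    nlinarith
  constructor
  · have he : t • z + (1 - t) • x₀ - x₀ = t • (z - x₀) := by module
    rw [htd] at he
    rw [he, norm_smul, Real.norm_eq_abs, ← hdd, abs_of_pos ht0]
    -- (t*d)^2 ≤ (3/(sqrt l * q))^2
    have hsl : 0 < Real.sqrt l := Real.sqrt_pos.2 hl
    have hrhs0 : 0 ≤ 3/(Real.sqrt l * q) := by positivity
    have hsq : (t*d)^2 ≤ (3/(Real.sqrt l * q))^2 := by
      have h1 : (t*d)^2 = t^2*d^2 := by ring
      have h2 : t^2*d^2 ≤ t^2*(8*q^4/l) := by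
        have := sq_nonneg t
        gcongr
      have h3 : t^2*(8*q^4/l) = 8/(l*q^2) := by
        rw [htd]; field_simp
      have h4 : (3/(Real.sqrt l * q))^2 = 9/(l*q^2) := by
        rw [div_pow, mul_pow, Real.sq_sqrt hl.le]; norm_num
      have h5 : 8/(l*q^2) ≤ 9/(l*q^2) := by
        apply div_le_div_of_nonneg_right (by norm_num) (by positivity)
      linarith
    nlinarith [mul_nonneg ht0.le hd0]
  · have h := lc_real hconv hz hx₀ (t := t) ht0.le (by linarith)
    refine h.trans ?_
    rw [EReal.coe_le_coe_iff, ← hdd]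
    have h1 : (1-t)*C ≤ C := mul_le_of_le_one_left hC (by linarith)
    have hq0' : 0 ≤ l/2*t*(1-t)*d^2 := by
      have : (0:ℝ) ≤ 1 - t := by linarith
      positivity
    have h2 : t*(m+1) ≤ -q/2 := by
      have hm1 : m + 1 ≤ m/2 := by linarith
      have : t*(m+1) ≤ t*(m/2) := mul_le_mul_of_nonneg_left hm1 ht0.le
      have hm' : m = -(q^4) := by linarith
      have he : t*(m/2) = -q/2 := by
        rw [htd, hm']; field_simp
      linarith
    linarith

lemma ebdd {H : Type*} [NormedAddCommGroup H] [NormedSpace ℝ H] {l : ℝ} (hl : 0 < l)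
    {Φ : H → EReal} (hconv : LambdaConvex l Φ) (hlsc : LowerSemicontinuous Φ)
    (hbot : ∀ v : H, Φ v ≠ ⊥) (hproper : ∃ v : H, Φ v ≠ ⊤) :
    ∃ m : ℝ, ∀ z : H, ((m : ℝ) : EReal) ≤ Φ z := by
  obtain ⟨x₀, htop⟩ := hproper
  set ax : ℝ := (Φ x₀).toReal with haxd
  have hax : Φ x₀ = (ax : EReal) := (EReal.coe_toReal htop (hbot x₀)).symm
  set C : ℝ := max ax 0 with hCd
  have hC : 0 ≤ C := le_max_right _ _
  have hx₀ : Φ x₀ ≤ (C : EReal) := by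
    rw [hax]; exact_mod_cast le_max_left _ _
  by_contra hcon
  push_neg at hcon
  have hsel : ∀ k : ℕ, ∃ u : H, ‖u - x₀‖ ≤ 1/(k+1 : ℝ) ∧ Φ u ≤ ((-(k:ℝ) : ℝ) : EReal) := by
    intro k
    obtain ⟨z, hz⟩ := hcon (-(2*((k:ℝ)+C) + 4*((k:ℝ)+C+1)^2/(l*(1/(k+1:ℝ))^2)))
    exact key1 hl hconv x₀ z C (k:ℝ) (1/(k+1:ℝ)) hC (by positivity) (by positivity) hx₀ hz.le
  choose u hu1 hu2 using hsel
  have htend : Tendsto u atTop (𝓝 x₀) := by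
    rw [tendsto_iff_norm_sub_tendsto_zero]
    apply squeeze_zero (fun k => norm_nonneg _) hu1
    exact tendsto_one_div_add_atTop_nhds_zero_nat
  have hev : ∀ᶠ k : ℕ in atTop, ((ax - 1 : ℝ) : EReal) < Φ (u k) := by
    have h := hlsc x₀ ((ax - 1 : ℝ) : EReal) (by show Φ x₀ > ((ax - 1 : ℝ) : EReal); rw [hax]; exact_mod_cast sub_one_lt ax)
    exact htend.eventually h
  have hev2 : ∀ᶠ k : ℕ in atTop, ax - 1 < -(k:ℝ) := by
    filter_upwards [hev] with k hk
    have := lt_of_lt_of_le hk (hu2 k)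
    exact_mod_cast this
  have hev3 : ∀ᶠ k : ℕ in atTop, -(k:ℝ) < ax - 1 := by
    have : Tendsto (fun k : ℕ => -(k:ℝ)) atTop atBot := tendsto_neg_atBot_iff.2 tendsto_natCast_atTop_atTop
    exact this.eventually_lt_atBot _
  obtain ⟨k, h1, h2⟩ := (hev2.and hev3).exists
  exact absurd h1 (not_lt.2 h2.le)

lemma sqrt_sqrt_pow4 {B : ℝ} (hB : 0 ≤ B) : Real.sqrt (Real.sqrt (B^4)) = B := by
  rw [show B^4 = (B^2)^2 by ring, Real.sqrt_sq (sq_nonneg B), Real.sqrt_sq hB]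



/-- Over a Banach stacking of real Hilbert spaces, if there is `λ > 0` such
that all `Φ_n` (`n ∈ ℕ`) are `λ`-convex, proper and lower semicontinuous, `Φ'` is `λ`-convex
and proper, and `(Φ_n)_{n∈ℕ}` Γ-converges to `Φ'` over the stacking, then the `Φ_n`
(`n ∈ ℕ ∪ {∞}`) are uniformly bounded below. -/
theorem banachStacking_uniform_lower_bound
    {M : Type*} [MetricSpace M]
    {X : ℕ → Type*} [∀ n, NormedAddCommGroup (X n)] [∀ n, InnerProductSpace ℝ (X n)]
    [∀ n, CompleteSpace (X n)]
    {Y : Type*} [NormedAddCommGroup Y] [InnerProductSpace ℝ Y] [CompleteSpace Y]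
    (ξ : ∀ n, X n → M) (ξ' : Y → M)
    -- Banach stacking, condition (i): the embeddings are 1-Lipschitz
    (hlip : ∀ n, LipschitzWith 1 (ξ n)) (hlip' : LipschitzWith 1 ξ')
    -- condition (ii): every element of the limit space is approximated by some sequence
    (hdense : ∀ y : Y, ∃ x : ∀ n, X n,
      Tendsto (fun n => ξ n (x n)) atTop (𝓝 (ξ' y)))
    -- condition (iii): addition and scaling are continuous over the stacking
    (hadd : ∀ (x x' : ∀ n, X n) (y y' : Y),
      Tendsto (fun n => ξ n (x n)) atTop (𝓝 (ξ' y)) →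
      Tendsto (fun n => ξ n (x' n)) atTop (𝓝 (ξ' y')) →
      Tendsto (fun n => ξ n (x n + x' n)) atTop (𝓝 (ξ' (y + y'))))
    (hsmul : ∀ (c : ℝ) (x : ∀ n, X n) (y : Y),
      Tendsto (fun n => ξ n (x n)) atTop (𝓝 (ξ' y)) →
      Tendsto (fun n => ξ n (c • x n)) atTop (𝓝 (ξ' (c • y))))
    -- condition (iv): the norms are continuous over the stacking
    (hnorm : ∀ (x : ∀ n, X n) (y : Y),
      Tendsto (fun n => ξ n (x n)) atTop (𝓝 (ξ' y)) →
      Tendsto (fun n => ‖x n‖) atTop (𝓝 ‖y‖))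
    -- the functionals, taking values in (−∞,+∞]
    (Φ : ∀ n, X n → EReal) (Φ' : Y → EReal)
    (hbot : ∀ n x, Φ n x ≠ ⊥) (hbot' : ∀ y, Φ' y ≠ ⊥)
    -- the convexity and regularity assumptions, with a single λ > 0
    (l : ℝ) (hl : 0 < l)
    (hconv : ∀ n, LambdaConvex l (Φ n)) (hconv' : LambdaConvex l Φ')
    (hproper : ∀ n, ∃ x, Φ n x ≠ ⊤) (hproper' : ∃ y, Φ' y ≠ ⊤)
    (hlsc : ∀ n, LowerSemicontinuous (Φ n))
    -- Γ-convergence over the stacking: liminf inequality and recovery sequences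
    (hliminf : ∀ (x : ∀ n, X n) (y : Y),
      Tendsto (fun n => ξ n (x n)) atTop (𝓝 (ξ' y)) →
      Φ' y ≤ liminf (fun n => Φ n (x n)) atTop)
    (hrec : ∀ y : Y, ∃ x : ∀ n, X n,
      Tendsto (fun n => ξ n (x n)) atTop (𝓝 (ξ' y)) ∧
      limsup (fun n => Φ n (x n)) atTop ≤ Φ' y) :
    ∃ L : ℝ, (∀ n, ∀ x : X n, (L : EReal) ≤ Φ n x) ∧ ∀ y : Y, (L : EReal) ≤ Φ' y := by
  classical
  suffices h : ∃ L : ℝ, ∀ n, ∀ x : X n, (L : EReal) ≤ Φ n x by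
    obtain ⟨L, hL⟩ := h
    refine ⟨L, hL, fun y => ?_⟩
    obtain ⟨x, hx, hxs⟩ := hrec y
    refine le_trans ?_ hxs
    exact le_limsup_of_frequently_le'
      (Eventually.frequently (Eventually.of_forall fun n => hL n (x n)))
  by_contra hcon
  push_neg at hcon
  -- per-n lower bounds, infima
  have hper : ∀ n, ∃ m : ℝ, ∀ z : X n, ((m : ℝ) : EReal) ≤ Φ n z :=
    fun n => ebdd hl (hconv n) (hlsc n) (hbot n) (hproper n)
  set μ : ℕ → EReal := fun n => sInf (Set.range (Φ n)) with hμd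
  have hμbot : ∀ n, μ n ≠ ⊥ := by
    intro n
    obtain ⟨m, hm⟩ := hper n
    intro hb
    have h1 : ((m : ℝ) : EReal) ≤ μ n := le_sInf (by rintro _ ⟨v, rfl⟩; exact hm v)
    rw [hb] at h1
    exact (EReal.coe_ne_bot m) (le_bot_iff.1 h1)
  have hμtop : ∀ n, μ n ≠ ⊤ := by
    intro n
    obtain ⟨x₀, hx₀⟩ := hproper n
    intro ht
    have h1 : μ n ≤ Φ n x₀ := sInf_le ⟨x₀, rfl⟩
    rw [ht] at h1
    exact hx₀ (top_le_iff.1 h1)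
  set m : ℕ → ℝ := fun n => (μ n).toReal with hmd
  have hmco : ∀ n, ((m n : ℝ) : EReal) = μ n := fun n => EReal.coe_toReal (hμtop n) (hμbot n)
  have hlb : ∀ n (v : X n), ((m n : ℝ) : EReal) ≤ Φ n v := by
    intro n v; rw [hmco n]; exact sInf_le ⟨v, rfl⟩
  have hnear : ∀ n, ∃ v : X n, Φ n v < ((m n + 1 : ℝ) : EReal) := by
    intro n
    have h1 : μ n < ((m n + 1 : ℝ) : EReal) := by
      rw [← hmco n]; exact_mod_cast lt_add_one (m n)
    obtain ⟨a, ⟨v, rfl⟩, ha⟩ := sInf_lt_iff.1 h1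
    exact ⟨v, ha⟩
  choose z hz using hnear
  -- m is unbounded below at arbitrarily large indices
  have hub : ∀ (L : ℝ) (N : ℕ), ∃ n, N ≤ n ∧ m n < L := by
    intro L N
    set K : ℝ := min L ((Finset.range (N+1)).inf'
      (Finset.nonempty_range_iff.2 (Nat.succ_ne_zero N)) m) with hKd
    obtain ⟨n, v, hv⟩ := hcon (K - 1)
    have hmn : m n < K - 1 := by exact_mod_cast lt_of_le_of_lt (hlb n v) hv
    refine ⟨n, ?_, ?_⟩
    · by_contra hn
      push_neg at hn
      have h2 : K ≤ m n := le_trans (min_le_right _ _)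
        (Finset.inf'_le m (Finset.mem_range.2 (by omega)))
      linarith
    · have h3 : K ≤ L := min_le_left _ _
      linarith
  have hfreq : ∀ k : ℕ, ∃ᶠ n in atTop, m n < -(k : ℝ) := by
    intro k
    rw [Filter.frequently_atTop]
    intro N
    obtain ⟨n, h1, h2⟩ := hub (-(k : ℝ)) N
    exact ⟨n, h1, h2⟩
  obtain ⟨φ, hφmono, hφ⟩ := Filter.extraction_forall_of_frequently hfreq
  -- recovery data at a proper point of Φ'
  obtain ⟨y₀, hy₀top⟩ := hproper'
  set c₀ : ℝ := (Φ' y₀).toReal with hc₀d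
  have hc₀ : Φ' y₀ = (c₀ : EReal) := (EReal.coe_toReal hy₀top (hbot' y₀)).symm
  obtain ⟨x, hx, hxls⟩ := hrec y₀
  set C : ℝ := max c₀ 0 + 1 with hCd
  have hmax0 : (0:ℝ) ≤ max c₀ 0 := le_max_right _ _
  have hC : 0 ≤ C := by rw [hCd]; linarith
  have hc₀C : c₀ + 1 ≤ C := by rw [hCd]; linarith [le_max_left c₀ 0]
  have hev : ∀ᶠ n in atTop, Φ n (x n) < (C : EReal) := by
    refine eventually_lt_of_limsup_lt ?_ (by isBoundedDefault)
    refine lt_of_le_of_lt hxls ?_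
    rw [hc₀]
    exact_mod_cast (by linarith : c₀ < C)
  obtain ⟨N, hN⟩ := Filter.eventually_atTop.1 hev
  -- threshold
  set M₀ : ℕ := ⌈max 4 (C+1)⌉₊ with hM₀d
  have hM₀ : max 4 (C+1) ≤ (M₀ : ℝ) := Nat.le_ceil _
  set P : ℕ → Prop := fun n => N ≤ n ∧ ∃ k, M₀ ≤ k ∧ φ k = n with hPd
  -- build modified sequence
  have hsel : ∀ n, ∃ u : X n,
      (P n → ‖u - x n‖ ≤ 3/(Real.sqrt l * Real.sqrt (Real.sqrt (-(m n)))) ∧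
        Φ n u ≤ ((C - (Real.sqrt (Real.sqrt (-(m n))))/2 : ℝ) : EReal)) ∧
      (¬ P n → u = x n) := by
    intro n
    by_cases hP : P n
    · obtain ⟨hNn, k, hk, hkn⟩ := hP
      have hmn : m n < -(k : ℝ) := hkn ▸ hφ k
      have hkM : (M₀ : ℝ) ≤ (k : ℝ) := by exact_mod_cast hk
      have hm4 : m n ≤ -4 := by
        have := le_trans (le_max_left 4 (C+1)) (hM₀.trans hkM)
        linarith
      have hmC : m n ≤ -(C+1) := by
        have := le_trans (le_max_right 4 (C+1)) (hM₀.trans hkM)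
        linarith
      refine ⟨(1/(Real.sqrt (Real.sqrt (-(m n))))^3) • z n
        + (1 - 1/(Real.sqrt (Real.sqrt (-(m n))))^3) • x n, fun _ => ?_, fun h => absurd ⟨hNn, k, hk, hkn⟩ h⟩
      exact key2 hl (hconv n) (x n) (z n) C (m n) hC (hN n hNn).le (hlb n) (hz n).le hm4 hmC
    · exact ⟨x n, fun h => absurd h hP, fun _ => rfl⟩
  choose w hw1 hw2 using hsel
  -- a lower bound on the 4th roots at used indices
  have hqgt : ∀ n k, M₀ ≤ k → φ k = n →
      Real.sqrt (Real.sqrt ((k : ℝ))) ≤ Real.sqrt (Real.sqrt (-(m n))) := by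
    intro n k hk hkn
    have hmn : m n < -(k : ℝ) := hkn ▸ hφ k
    exact Real.sqrt_le_sqrt (Real.sqrt_le_sqrt (by linarith))
  have hsl : 0 < Real.sqrt l := Real.sqrt_pos.2 hl
  -- convergence of the modified sequence
  have hwx : Tendsto (fun n => ξ n (w n)) atTop (𝓝 (ξ' y₀)) := by
    rw [Metric.tendsto_atTop] at hx ⊢
    intro ε hε
    obtain ⟨N₂, hN₂⟩ := hx (ε/2) (by linarith)
    refine ⟨max N₂ (φ (max M₀ (⌈(6/(Real.sqrt l * ε))^4⌉₊ + 1)) + 1), fun n hn => ?_⟩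
    have hn₂ : N₂ ≤ n := le_trans (le_max_left _ _) hn
    have hdist2 : dist (ξ n (x n)) (ξ' y₀) < ε/2 := hN₂ n hn₂
    have hnw : ‖w n - x n‖ ≤ ε/2 := by
      by_cases hP : P n
      · obtain ⟨hNn, k, hk, hkn⟩ := id hP
        have h1 := (hw1 n hP).1
        set K : ℕ := max M₀ (⌈(6/(Real.sqrt l * ε))^4⌉₊ + 1) with hKd
        have hkK : K < k := by
          have h2 : φ K < n := lt_of_lt_of_le (Nat.lt_succ_self _) (le_trans (le_max_right _ _) hn)
          rw [← hkn] at h2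
          exact hφmono.lt_iff_lt.1 h2
        have hB0 : 0 ≤ 6/(Real.sqrt l * ε) := by positivity
        have hB4 : (6/(Real.sqrt l * ε))^4 ≤ (k : ℝ) := by
          have h3 : (6/(Real.sqrt l * ε))^4 ≤ (⌈(6/(Real.sqrt l * ε))^4⌉₊ : ℝ) := Nat.le_ceil _
          have h4 : (⌈(6/(Real.sqrt l * ε))^4⌉₊ : ℕ) ≤ K := le_trans (Nat.le_succ _) (le_max_right _ _)
          have h5 : (K : ℝ) ≤ (k : ℝ) := by exact_mod_cast hkK.le
          calc (6/(Real.sqrt l * ε))^4 ≤ (⌈(6/(Real.sqrt l * ε))^4⌉₊ : ℝ) := h3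
            _ ≤ (K : ℝ) := by exact_mod_cast h4
            _ ≤ (k : ℝ) := h5
        have hq1 : 6/(Real.sqrt l * ε) ≤ Real.sqrt (Real.sqrt ((k : ℝ))) := by
          rw [← sqrt_sqrt_pow4 hB0]
          exact Real.sqrt_le_sqrt (Real.sqrt_le_sqrt hB4)
        have hq2 : 6/(Real.sqrt l * ε) ≤ Real.sqrt (Real.sqrt (-(m n))) := hq1.trans (hqgt n k hk hkn)
        have hq3 : 0 < 6/(Real.sqrt l * ε) := by positivity
        have hfin : 3/(Real.sqrt l * Real.sqrt (Real.sqrt (-(m n)))) ≤ ε/2 := by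
          have h6 : Real.sqrt l * (6/(Real.sqrt l * ε)) ≤ Real.sqrt l * Real.sqrt (Real.sqrt (-(m n))) :=
            mul_le_mul_of_nonneg_left hq2 hsl.le
          have h7 : Real.sqrt l * (6/(Real.sqrt l * ε)) = 6/ε := by field_simp
          have h8 : 0 < (6:ℝ)/ε := by positivity
          rw [h7] at h6
          calc 3/(Real.sqrt l * Real.sqrt (Real.sqrt (-(m n)))) ≤ 3/(6/ε) :=
              div_le_div_of_nonneg_left (by norm_num) h8 h6
            _ = ε/2 := by field_simp; ring
        exact h1.trans hfin
      · rw [hw2 n hP]; simp; linarith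
    have hlipd : dist (ξ n (w n)) (ξ n (x n)) ≤ ‖w n - x n‖ := by
      have h9 := (hlip n).dist_le_mul (w n) (x n)
      rwa [NNReal.coe_one, one_mul, dist_eq_norm] at h9
    calc dist (ξ n (w n)) (ξ' y₀) ≤ dist (ξ n (w n)) (ξ n (x n)) + dist (ξ n (x n)) (ξ' y₀) :=
        dist_triangle _ _ _
      _ < ε/2 + ε/2 := add_lt_add_of_le_of_lt (hlipd.trans hnw) hdist2
      _ = ε := by ring
  -- liminf along the modified sequence is at most c₀ - 1 : contradiction
  have hli := hliminf w y₀ hwx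
  have hfreq2 : ∃ᶠ n in atTop, Φ n (w n) ≤ ((c₀ - 1 : ℝ) : EReal) := by
    rw [Filter.frequently_atTop]
    intro N'
    set k : ℕ := max (max M₀ (max N' N)) (⌈(2*(C - c₀ + 1))^4⌉₊) with hkd
    refine ⟨φ k, ?_, ?_⟩
    · calc N' ≤ k := le_trans (le_max_left _ _) (le_trans (le_max_right _ _) (le_max_left _ _))
        _ ≤ φ k := hφmono.le_apply
    · have hkM : M₀ ≤ k := le_trans (le_max_left _ _) (le_max_left _ _)
      have hkN : N ≤ φ k :=
        le_trans (le_trans (le_max_right _ _) (le_trans (le_max_right _ _) (le_max_left _ _))) hφmono.le_apply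
      have hP : P (φ k) := ⟨hkN, k, hkM, rfl⟩
      have h1 := (hw1 (φ k) hP).2
      have hb0 : (0:ℝ) ≤ 2*(C - c₀ + 1) := by linarith
      have hb4 : (2*(C - c₀ + 1))^4 ≤ (k : ℝ) := by
        calc (2*(C - c₀ + 1))^4 ≤ (⌈(2*(C - c₀ + 1))^4⌉₊ : ℝ) := Nat.le_ceil _
          _ ≤ (k : ℝ) := by exact_mod_cast le_max_right _ _
      have hq1 : 2*(C - c₀ + 1) ≤ Real.sqrt (Real.sqrt ((k : ℝ))) := by
        rw [← sqrt_sqrt_pow4 hb0]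
        exact Real.sqrt_le_sqrt (Real.sqrt_le_sqrt hb4)
      have hq2 : 2*(C - c₀ + 1) ≤ Real.sqrt (Real.sqrt (-(m (φ k)))) := hq1.trans (hqgt (φ k) k hkM rfl)
      refine h1.trans ?_
      exact_mod_cast (by linarith : C - (Real.sqrt (Real.sqrt (-(m (φ k)))))/2 ≤ c₀ - 1)
  have hle : liminf (fun n => Φ n (w n)) atTop ≤ ((c₀ - 1 : ℝ) : EReal) :=
    liminf_le_of_frequently_le' hfreq2
  have hcontra : (c₀ : EReal) ≤ ((c₀ - 1 : ℝ) : EReal) := (hc₀ ▸ hli).trans hle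
  have : c₀ ≤ c₀ - 1 := by exact_mod_cast hcontra
  linarith
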